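/- If a subgroup H of a group G is δ-normal in G (i.e., every finite intersection of conjugates of H is infinite), then any finite-index subgroup H' of H is also δ-normal in G. -/

import Mathlib

/-- The conjugate `gHg⁻¹` of a subgroup `H` by an element `g`. -/
def conjSubgroup {G : Type*} [Group G] (g : G) (H : Subgroup G) : Subgroup G :=
  Subgroup.map (MulAut.conj g).toMonoidHom H

/-- A subgroup `H ≤ G` is δ-normal if every finite intersection of conjugates of `H`
is infinite. -/
def IsDeltaNormal {G : Type*} [Group G] (H : Subgroup G) : Prop :=
  ∀ (n : ℕ) (g : Fin n → G), ((⨅ i, conjSubgroup (g i) H : Subgroup G) : Set G).Infinite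

lemma conjSubgroup_relIndex {G : Type*} [Group G] (g : G) (H H' : Subgroup G) :
    (conjSubgroup g H').relIndex (conjSubgroup g H) = H'.relIndex H := by
  have h1 : conjSubgroup g H' =
      Subgroup.comap ((MulAut.conj g).symm.toMonoidHom) H' := by
    simp [conjSubgroup, Subgroup.map_equiv_eq_comap_symm]
  rw [h1, Subgroup.relIndex_comap]
  congr 1
  show Subgroup.map ((MulAut.conj g).symm.toMonoidHom)
      (Subgroup.map (MulAut.conj g).toMonoidHom H) = H
  rw [Subgroup.map_map]
  convert Subgroup.map_id H
  ext x
  simp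

/-- If `H` is δ-normal in `G`, then any finite-index subgroup `H'` of `H` is δ-normal in `G`. -/
theorem finiteIndex_subgroup_of_deltaNormal_is_deltaNormal
    {G : Type*} [Group G] (H H' : Subgroup G) (hle : H' ≤ H)
    (hfi : (H'.subgroupOf H).FiniteIndex) (hδ : IsDeltaNormal H) :
    IsDeltaNormal H' := by
  intro n g
  set K : Subgroup G := ⨅ i, conjSubgroup (g i) H with hK
  set K' : Subgroup G := ⨅ i, conjSubgroup (g i) H' with hK'
  have hKinf : (K : Set G).Infinite := hδ n g
  have hle' : K' ≤ K := iInf_mono fun i => by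
    exact Subgroup.map_mono hle
  have hrel : K'.relIndex K ≠ 0 := by
    apply Subgroup.relIndex_iInf_ne_zero
    intro i
    have h1 : (conjSubgroup (g i) H').relIndex (conjSubgroup (g i) H) ≠ 0 := by
      rw [conjSubgroup_relIndex]
      exact hfi.index_ne_zero
    intro h0
    exact h1 (Subgroup.relIndex_eq_zero_of_le_right (iInf_le _ i) h0)
  -- K is infinite as a type
  have : Infinite K := Set.infinite_coe_iff.mpr hKinf
  have hcardK : Nat.card K = 0 := Nat.card_eq_zero_of_infinite
  have hmul : (K'.subgroupOf K).index * Nat.card (K'.subgroupOf K) = Nat.card K :=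
    Subgroup.index_mul_card _
  rw [hcardK] at hmul
  have hsub0 : Nat.card (K'.subgroupOf K) = 0 := by
    rcases Nat.mul_eq_zero.mp hmul with h | h
    · exact absurd h hrel
    · exact h
  have : Infinite (K'.subgroupOf K) := by
    rcases Nat.card_eq_zero.mp hsub0 with h | h
    · exact absurd ⟨1⟩ (not_nonempty_iff.mpr h)
    · exact h
  have : Infinite K' :=
    Infinite.of_injective _ (Subgroup.subgroupOfEquivOfLe hle').toEquiv.injective
  exact Set.infinite_coe_iff.mp this
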